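/- For a planar tree T with nodes u_0, ..., u_{‖T‖} listed in lexicographic order, the index of the first visit of u_k by the depth-first traversal satisfies m_T(k) = 2k − H_T(k) for all k ∈ {0,...,‖T‖}, where H_T(k) = |u_k| is the height of u_k. -/

import Mathlib

/-- A rooted planar tree: a finite, prefix-closed set of words on `ℕ` containing the
empty word, closed under taking smaller siblings. -/
def IsPlanarTree (T : Finset (List ℕ)) : Prop :=
  ([] ∈ T) ∧
  (∀ u ∈ T, ∀ v : List ℕ, v <+: u → v ∈ T) ∧
  (∀ (u : List ℕ) (i : ℕ), u ++ [i] ∈ T → ∀ j < i, u ++ [j] ∈ T)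

/-- The `k`-th vertex of `T` in lexicographic order. -/
noncomputable def vtx (T : Finset (List ℕ)) (k : ℕ) : List ℕ :=
  (T.sort (· ≤ ·)).getD k []

/-- The height sequence: `HT T k` is the depth of the `k`-th vertex in lex. order. -/
noncomputable def HT (T : Finset (List ℕ)) (k : ℕ) : ℕ := (vtx T k).length

/-- `c : ℕ → List ℕ` is the depth-first traversal of `T`: it starts at the root; from
the current vertex it moves to the lexicographically smallest unvisited child if any,
and otherwise back to the parent. -/
def IsDFS (T : Finset (List ℕ)) (c : ℕ → List ℕ) : Prop :=
  c 0 = [] ∧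
  ∀ j : ℕ, j < 2 * (T.card - 1) →
    (((∃ v ∈ T, (∃ i : ℕ, v = c j ++ [i]) ∧ ∀ i ≤ j, c i ≠ v) →
        (c (j+1) ∈ T ∧ (∃ i : ℕ, c (j+1) = c j ++ [i]) ∧ (∀ i ≤ j, c i ≠ c (j+1)) ∧
          ∀ v ∈ T, (∃ i : ℕ, v = c j ++ [i]) → (∀ i ≤ j, c i ≠ v) → c (j+1) ≤ v)) ∧
     ((¬ ∃ v ∈ T, (∃ i : ℕ, v = c j ++ [i]) ∧ ∀ i ≤ j, c i ≠ v) →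
        c (j+1) = (c j).dropLast))

/-- `mT T c k` : the first visit time of the `k`-th vertex (in lex. order) by the
depth-first traversal `c`. -/
noncomputable def mT (T : Finset (List ℕ)) (c : ℕ → List ℕ) (k : ℕ) : ℕ :=
  sInf {j : ℕ | c j = vtx T k}

namespace FirstVisitAux

/-! ### Lexicographic order helper lemmas -/

lemma lex_iff_lt {l₁ l₂ : List ℕ} : List.Lex (· < ·) l₁ l₂ ↔ l₁ < l₂ := Iff.rfl

lemma prefix_le {l₁ l₂ : List ℕ} (h : l₁ <+: l₂) : l₁ ≤ l₂ := by
  obtain ⟨t, rfl⟩ := h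
  cases t with
  | nil => simp
  | cons a t =>
      have h0 : List.Lex (· < ·) (l₁ ++ []) (l₁ ++ (a :: t)) :=
        List.Lex.append_left _ List.Lex.nil l₁
      rw [List.append_nil] at h0
      exact le_of_lt (lex_iff_lt.mp h0)

lemma lt_append_cons (l : List ℕ) (a : ℕ) (t : List ℕ) : l < l ++ (a :: t) := by
  have h0 : List.Lex (· < ·) (l ++ []) (l ++ (a :: t)) :=
    List.Lex.append_left _ List.Lex.nil l
  rw [List.append_nil] at h0
  exact lex_iff_lt.mp h0

lemma append_lt_append_iff (w : List ℕ) {l₁ l₂ : List ℕ} :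
    w ++ l₁ < w ++ l₂ ↔ l₁ < l₂ := by
  rw [← lex_iff_lt, ← lex_iff_lt]
  induction w with
  | nil => exact Iff.rfl
  | cons a w ih => simpa [List.lex_cons_iff] using ih

lemma append_le_append_iff (w : List ℕ) {l₁ l₂ : List ℕ} :
    w ++ l₁ ≤ w ++ l₂ ↔ l₁ ≤ l₂ := by
  rw [← not_lt, ← not_lt, not_iff_not]
  exact append_lt_append_iff w

lemma cons_lt_singleton {a j : ℕ} {s : List ℕ} : (a :: s) < [j] ↔ a < j := by
  rw [← lex_iff_lt]
  constructor
  · intro h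
    cases h with
    | cons h => exact absurd h (fun h' => nomatch h')
    | rel h => exact h
  · exact List.Lex.rel

/-- If `w ≤ u < w ++ [i]`, then `w` is a prefix of `u`. -/
lemma prefix_of_between :
    ∀ (w u : List ℕ) (i : ℕ), w ≤ u → u < w ++ [i] → w <+: u
  | [], u, _, _, _ => List.nil_prefix
  | a :: w', [], _, h1, _ =>
      absurd (lex_iff_lt.mp List.Lex.nil) (not_lt.mpr h1)
  | a :: w', b :: u', i, h1, h2 => by
      have h2' : List.Lex (· < ·) (b :: u') (a :: (w' ++ [i])) :=
        lex_iff_lt.mpr (by simpa using h2)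
      cases h2' with
      | rel h => exact absurd (lex_iff_lt.mp (List.Lex.rel h)) (not_lt.mpr h1)
      | cons h =>
          have hle : w' ≤ u' := by
            rw [← not_lt]
            intro hl
            exact absurd (lex_iff_lt.mp (List.Lex.cons (lex_iff_lt.mpr hl)))
              (not_lt.mpr h1)
          exact List.cons_prefix_cons.mpr
            ⟨rfl, prefix_of_between w' u' i hle (lex_iff_lt.mp h)⟩

/-- Key combinatorial lemma: if `u'` is the lex-successor of `u` in `T`, with
`u' = w ++ [i₀]`, `w <+: u`, and `p` is a prefix of `u` strictly longer than `w`,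
then every child of `p` in `T` is `≤ u`. -/
lemma child_le {T : Finset (List ℕ)} (hT : IsPlanarTree T) {u u' w p : List ℕ} {i₀ j : ℕ}
    (hu' : u' = w ++ [i₀]) (hu'T : u' ∈ T)
    (hwu : w <+: u) (hpu : p <+: u) (hlen : w.length < p.length)
    (huu' : u < u') (hnext : ∀ v ∈ T, u < v → u' ≤ v)
    (hch : p ++ [j] ∈ T) : p ++ [j] ≤ u := by
  by_contra hcon
  rw [not_le] at hcon
  subst hu'
  obtain ⟨s₀, hs₀⟩ := hwu
  cases s₀ with
  | nil =>
      rw [List.append_nil] at hs₀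
      subst hs₀
      exact absurd hpu.length_le (by omega)
  | cons b t =>
      subst hs₀
      have hbi : b < i₀ := cons_lt_singleton.mp ((append_lt_append_iff w).mp huu')
      have hb1T : w ++ [b+1] ∈ T := by
        rcases eq_or_lt_of_le (Nat.succ_le_of_lt hbi) with h | h
        · have h' : b + 1 = i₀ := h
          rwa [h']
        · exact hT.2.2 w i₀ hu'T (b+1) h
      have hub1 : w ++ b :: t < w ++ [b+1] :=
        (append_lt_append_iff w).mpr (cons_lt_singleton.mpr (Nat.lt_succ_self b))
      have hi₀ : i₀ = b + 1 := by
        have h1 := hnext _ hb1T hub1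
        have h2 := (append_le_append_iff w).mp h1
        have h4 : ¬ (b + 1 < i₀) := fun hh =>
          absurd (cons_lt_singleton.mpr hh) (not_lt.mpr h2)
        omega
      subst hi₀
      obtain ⟨q, hq⟩ := List.prefix_of_prefix_length_le ⟨b :: t, rfl⟩ hpu (le_of_lt hlen)
      cases q with
      | nil =>
          rw [List.append_nil] at hq
          subst hq
          exact absurd hlen (lt_irrefl _)
      | cons b' r =>
          subst hq
          obtain ⟨s, hsu⟩ := hpu
          rw [List.append_assoc] at hsu
          have hinj := List.append_cancel_left hsu
          rw [List.cons_append] at hinj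
          injection hinj with hb' hrs
          subst hb'
          cases s with
          | nil =>
              rw [List.append_nil] at hrs
              subst hrs
              have hzT : (w ++ b' :: r) ++ [0] ∈ T := by
                rcases Nat.eq_zero_or_pos j with h | h
                · subst h; exact hch
                · exact hT.2.2 _ j hch 0 h
              have huz : w ++ b' :: r < (w ++ b' :: r) ++ [0] := lt_append_cons _ 0 []
              have hzu' : (w ++ b' :: r) ++ [0] < w ++ [b'+1] := by
                rw [List.append_assoc]
                exact (append_lt_append_iff w).mpr
                  (cons_lt_singleton.mpr (Nat.lt_succ_self b'))
              exact absurd (hnext _ hzT huz) (not_le.mpr hzu')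
          | cons a s' =>
              subst hrs
              have haj : a < j := by
                have h1 : (w ++ b' :: r) ++ (a :: s') < (w ++ b' :: r) ++ [j] := by
                  simpa using hcon
                exact cons_lt_singleton.mp ((append_lt_append_iff _).mp h1)
              have hzT : (w ++ b' :: r) ++ [a+1] ∈ T := by
                rcases eq_or_lt_of_le (Nat.succ_le_of_lt haj) with h | h
                · have h' : a + 1 = j := h
                  rwa [h']
                · exact hT.2.2 _ j hch (a+1) h
              have huz : w ++ b' :: (r ++ a :: s') < (w ++ b' :: r) ++ [a+1] := by
                have h1 : (w ++ b' :: r) ++ (a :: s') < (w ++ b' :: r) ++ [a+1] :=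
                  (append_lt_append_iff _).mpr
                    (cons_lt_singleton.mpr (Nat.lt_succ_self a))
                simpa using h1
              have hzu' : (w ++ b' :: r) ++ [a+1] < w ++ [b'+1] := by
                rw [List.append_assoc]
                exact (append_lt_append_iff w).mpr
                  (cons_lt_singleton.mpr (Nat.lt_succ_self b'))
              exact absurd (hnext _ hzT huz) (not_le.mpr hzu')

/-! ### Facts about `vtx` -/

variable {T : Finset (List ℕ)}

lemma card_pos (hT : IsPlanarTree T) : 0 < T.card := Finset.card_pos.mpr ⟨[], hT.1⟩

lemma vtx_eq {k : ℕ} (hk : k < T.card) :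
    vtx T k = (T.sort (· ≤ ·))[k]'(by rwa [Finset.length_sort]) :=
  List.getD_eq_getElem _ _ _

lemma vtx_mem {k : ℕ} (hk : k < T.card) : vtx T k ∈ T := by
  rw [vtx_eq hk]
  exact (Finset.mem_sort _).mp (List.getElem_mem _)

lemma vtx_lt_vtx {k k' : ℕ} (h : k < k') (hk' : k' < T.card) : vtx T k < vtx T k' := by
  have hk : k < T.card := lt_trans h hk'
  rw [vtx_eq hk, vtx_eq hk']
  have hs := (T.sortedLT_sort).strictMono_get
    (a := ⟨k, by rwa [Finset.length_sort]⟩) (b := ⟨k', by rwa [Finset.length_sort]⟩)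
    (by exact h)
  simpa [List.get_eq_getElem] using hs

lemma vtx_le_iff {k k' : ℕ} (hk : k < T.card) (hk' : k' < T.card) :
    vtx T k ≤ vtx T k' ↔ k ≤ k' := by
  constructor
  · intro h
    by_contra hcon
    rw [not_le] at hcon
    exact absurd (vtx_lt_vtx hcon hk) (not_lt.mpr h)
  · intro h
    rcases eq_or_lt_of_le h with rfl | h
    · exact le_refl _
    · exact le_of_lt (vtx_lt_vtx h hk')

lemma vtx_surj {v : List ℕ} (hv : v ∈ T) : ∃ m, m < T.card ∧ vtx T m = v := by
  have hv' : v ∈ T.sort (· ≤ ·) := (Finset.mem_sort _).mpr hv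
  obtain ⟨n, hn, hget⟩ := List.mem_iff_getElem.mp hv'
  have hn' : n < T.card := by rwa [Finset.length_sort] at hn
  exact ⟨n, hn', by rw [vtx_eq hn']; exact hget⟩

lemma vtx_zero (hT : IsPlanarTree T) : vtx T 0 = [] := by
  obtain ⟨m, hm, hv⟩ := vtx_surj hT.1
  have h0 : vtx T 0 ≤ vtx T m := (vtx_le_iff (card_pos hT) hm).mpr (Nat.zero_le m)
  rw [hv] at h0
  exact le_antisymm h0 (prefix_le List.nil_prefix)

lemma vtx_next {k : ℕ} {v : List ℕ} (hk : k + 1 < T.card) (hv : v ∈ T)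
    (h : vtx T k < v) : vtx T (k+1) ≤ v := by
  obtain ⟨m, hm, rfl⟩ := vtx_surj hv
  have hkm : k < m := by
    by_contra h'
    rw [not_lt] at h'
    exact absurd ((vtx_le_iff hm (by omega)).mpr h') (not_le.mpr h)
  exact (vtx_le_iff hk hm).mpr hkm

/-! ### The main induction -/

lemma main (T : Finset (List ℕ)) (hT : IsPlanarTree T)
    (c : ℕ → List ℕ) (hc : IsDFS T c) :
    ∀ k, k < T.card → ∃ m : ℕ,
      m + (vtx T k).length = 2 * k ∧
      c m = vtx T k ∧
      (∀ i ≤ m, c i ∈ T ∧ c i ≤ vtx T k) ∧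
      (∀ v ∈ T, v ≤ vtx T k → ∃ i ≤ m, c i = v) ∧
      (∀ i < m, c i < vtx T k) := by
  intro k
  induction k with
  | zero =>
      intro _
      refine ⟨0, by simp [vtx_zero hT], by rw [vtx_zero hT]; exact hc.1, ?_, ?_, ?_⟩
      · intro i hi
        have : i = 0 := Nat.le_zero.mp hi
        subst this
        rw [hc.1, vtx_zero hT]
        exact ⟨hT.1, le_refl _⟩
      · intro v hv hle
        rw [vtx_zero hT] at hle
        have hv0 : v = [] := le_antisymm hle (prefix_le List.nil_prefix)
        exact ⟨0, le_refl 0, by rw [hc.1, hv0]⟩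
      · intro i hi
        exact absurd hi (Nat.not_lt_zero i)
  | succ k ih =>
      intro hk1
      obtain ⟨m, hm, hcm, hball, hsurj, hltm⟩ := ih (by omega)
      set u := vtx T k with hu_def
      set u' := vtx T (k+1) with hu'_def
      have huT : u ∈ T := vtx_mem (by omega)
      have hu'T : u' ∈ T := vtx_mem hk1
      have huu' : u < u' := vtx_lt_vtx (Nat.lt_succ_self k) hk1
      have hnext : ∀ v ∈ T, u < v → u' ≤ v := fun v hv h => vtx_next hk1 hv h
      have hne : u' ≠ [] := by
        intro h
        rw [h] at huu'
        exact absurd huu' (not_lt.mpr (prefix_le List.nil_prefix))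
      set w := u'.dropLast with hw_def
      set i₀ := u'.getLast hne with hi₀_def
      have hu'eq : u' = w ++ [i₀] := (List.dropLast_append_getLast hne).symm
      have hwT : w ∈ T := hT.2.1 u' hu'T w (List.dropLast_prefix u')
      have hwu'lt : w < u' := by
        rw [hu'eq]
        exact lt_append_cons w i₀ []
      have hwu : w ≤ u := by
        by_contra h
        rw [not_le] at h
        exact absurd (hnext w hwT h) (not_le.mpr hwu'lt)
      have hwpre : w <+: u := prefix_of_between w u i₀ hwu (hu'eq ▸ huu')
      have hwlen : w.length ≤ u.length := hwpre.length_le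
      set d := u.length - w.length with hd_def
      have hdlen : w.length + d = u.length := by omega
      have h2n : m + d < 2 * (T.card - 1) := by omega
      -- up phase
      have hC : ∀ t, t ≤ d → c (m + t) = u.take (u.length - t) := by
        intro t
        induction t with
        | zero =>
            intro _
            simpa using hcm
        | succ t iht =>
            intro ht
            have hct := iht (by omega)
            have hplen : (u.take (u.length - t)).length = u.length - t := by
              rw [List.length_take]; omega
            have hj : m + t < 2 * (T.card - 1) := by omega
            have hnone : ¬ ∃ v ∈ T, (∃ i, v = c (m+t) ++ [i]) ∧ ∀ i ≤ m + t, c i ≠ v := by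
              rintro ⟨v, hvT, ⟨j', hj'⟩, hunv⟩
              rw [hct] at hj'
              subst hj'
              have hvle : u.take (u.length - t) ++ [j'] ≤ u :=
                child_le hT hu'eq hu'T hwpre (List.take_prefix _ _)
                  (by rw [hplen]; omega) (hu'eq ▸ huu') hnext hvT
              obtain ⟨i, hi, hci⟩ := hsurj _ hvT hvle
              exact hunv i (by omega) hci
            have hstep := (hc.2 (m+t) hj).2 hnone
            rw [hct] at hstep
            show c (m + (t+1)) = _
            rw [show m + (t+1) = (m+t)+1 by omega, hstep,
              List.dropLast_eq_take, List.take_take, hplen]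
            congr 1
            omega
      have hcw : c (m + d) = w := by
        rw [hC d (le_refl d), show u.length - d = w.length by omega]
        exact (List.prefix_iff_eq_take.mp hwpre).symm
      have hallle : ∀ i ≤ m + d, c i ∈ T ∧ c i ≤ u := by
        intro i hi
        rcases le_or_gt i m with h | h
        · exact hball i h
        · have hci : c i = u.take (u.length - (i - m)) := by
            have := hC (i - m) (by omega)
            rwa [show m + (i - m) = i by omega] at this
          rw [hci]
          exact ⟨hT.2.1 u huT _ (List.take_prefix _ _), prefix_le (List.take_prefix _ _)⟩
      have hu'unvis : ∀ i ≤ m + d, c i ≠ u' := by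
        intro i hi h
        have := (hallle i hi).2
        rw [h] at this
        exact absurd huu' (not_lt.mpr this)
      have hchild : (∃ i : ℕ, u' = c (m+d) ++ [i]) := ⟨i₀, by rw [hcw]; exact hu'eq⟩
      have hex : ∃ v ∈ T, (∃ i, v = c (m+d) ++ [i]) ∧ ∀ i ≤ m + d, c i ≠ v :=
        ⟨u', hu'T, hchild, hu'unvis⟩
      obtain ⟨hmemT, _, hunvis, hmin⟩ := (hc.2 (m+d) h2n).1 hex
      have hcnew : c (m+d+1) = u' := by
        have h1 : c (m+d+1) ≤ u' := hmin u' hu'T hchild hu'unvis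
        rcases le_or_gt (c (m+d+1)) u with h | h
        · obtain ⟨i, hi, hci⟩ := hsurj _ hmemT h
          exact absurd hci (hunvis i (by omega))
        · exact le_antisymm h1 (hnext _ hmemT h)
      have hu'len : u'.length = w.length + 1 := by
        rw [hu'eq, List.length_append, List.length_singleton]
      refine ⟨m + d + 1, by omega, hcnew, ?_, ?_, ?_⟩
      · intro i hi
        rcases le_or_gt i (m+d) with h | h
        · obtain ⟨h1, h2⟩ := hallle i h
          exact ⟨h1, le_trans h2 (le_of_lt huu')⟩
        · have : i = m + d + 1 := by omega
          rw [this, hcnew]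
          exact ⟨hu'T, le_refl _⟩
      · intro v hvT hvle
        rcases le_or_gt v u with h | h
        · obtain ⟨i, hi, hci⟩ := hsurj v hvT h
          exact ⟨i, by omega, hci⟩
        · have hveq : v = u' := le_antisymm hvle (hnext v hvT h)
          exact ⟨m + d + 1, le_refl _, hveq ▸ hcnew⟩
      · intro i hi
        exact lt_of_le_of_lt (hallle i (by omega)).2 huu'

end FirstVisitAux

/-- for a planar tree `T` and its depth-first traversal `c`, the first
visit time of the `k`-th vertex satisfies `m_T(k) = 2k - H_T(k)`. -/
theorem first_visit_time (T : Finset (List ℕ)) (hT : IsPlanarTree T)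
    (c : ℕ → List ℕ) (hc : IsDFS T c) (k : ℕ) (hk : k ≤ T.card - 1) :
    mT T c k + HT T k = 2 * k := by
  have hcard := FirstVisitAux.card_pos hT
  have hkc : k < T.card := by omega
  obtain ⟨m, hm, hcm, _, _, hltm⟩ := FirstVisitAux.main T hT c hc k hkc
  have hmt : mT T c k = m := by
    have h1 : m ∈ {j : ℕ | c j = vtx T k} := hcm
    refine le_antisymm (Nat.sInf_le h1) ?_
    have h2 := Nat.sInf_mem (⟨m, h1⟩ : Set.Nonempty {j : ℕ | c j = vtx T k})
    by_contra hcon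
    rw [not_le] at hcon
    exact absurd (h2 : c _ = vtx T k) (ne_of_lt (hltm _ hcon))
  rw [hmt]
  exact hm
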